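/- If π > 0 entrywise and O ∈ R^{n×m} and T ∈ R^{m×m} both have rank m (with m ≤ n), then rank(P_{2,1}) = m, and if U ∈ R^{n×m} is the matrix of left singular vectors of P_{2,1} corresponding to its m nonzero singular values, then range(U) = range(O); in particular U^T O is invertible. -/

import Mathlib

open Matrix

lemma aux_isUnit_of_rank {m : ℕ} (A : Matrix (Fin m) (Fin m) ℝ) (hA : A.rank = m) :
    IsUnit A := by
  rw [← Matrix.mulVec_injective_iff_isUnit]
  have hker : LinearMap.ker A.mulVecLin = ⊥ := by
    have h := LinearMap.finrank_range_add_finrank_ker A.mulVecLin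
    rw [Module.finrank_pi, Fintype.card_fin] at h
    have : Module.finrank ℝ (LinearMap.ker A.mulVecLin) = 0 := by
      have : A.rank = Module.finrank ℝ (LinearMap.range A.mulVecLin) := rfl
      omega
    exact Submodule.finrank_eq_zero.mp this
  have := LinearMap.ker_eq_bot.mp hker
  exact this

lemma aux_ker_of_rank {m n : ℕ} (A : Matrix (Fin n) (Fin m) ℝ) (hA : A.rank = m) :
    Function.Injective A.mulVec := by
  have hker : LinearMap.ker A.mulVecLin = ⊥ := by
    have h := LinearMap.finrank_range_add_finrank_ker A.mulVecLin
    rw [Module.finrank_pi, Fintype.card_fin] at h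
    have : Module.finrank ℝ (LinearMap.ker A.mulVecLin) = 0 := by
      have : A.rank = Module.finrank ℝ (LinearMap.range A.mulVecLin) := rfl
      omega
    exact Submodule.finrank_eq_zero.mp this
  have := LinearMap.ker_eq_bot.mp hker
  exact this

/-- if `π > 0` entrywise and `O`, `T` have rank `m` (with `m ≤ n`), then
`P_{2,1} = O T diag(π) Oᵀ` has rank `m`; and if `U` is the `n × m` matrix of left singular
vectors of `P_{2,1}` corresponding to its `m` nonzero singular values (equivalently, `U` has
orthonormal columns spanning the column space of `P_{2,1}`), then
`range(U) = range(O)`, and in particular `Uᵀ O` is invertible. -/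
theorem hmm_svd_U_range (m n : ℕ) (hmn : m ≤ n)
    (T : Matrix (Fin m) (Fin m) ℝ) (O : Matrix (Fin n) (Fin m) ℝ) (π : Fin m → ℝ)
    (hπ : ∀ i, 0 < π i) (hO : O.rank = m) (hT : T.rank = m)
    (P21 : Matrix (Fin n) (Fin n) ℝ) (hP21 : P21 = O * T * Matrix.diagonal π * Oᵀ)
    (U : Matrix (Fin n) (Fin m) ℝ)
    (hUorth : Uᵀ * U = 1)
    (hUspan : LinearMap.range U.mulVecLin = LinearMap.range P21.mulVecLin) :
    P21.rank = m ∧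
    LinearMap.range U.mulVecLin = LinearMap.range O.mulVecLin ∧
    IsUnit (Uᵀ * O) := by
  -- diag(π) is a unit
  have hD : IsUnit (Matrix.diagonal π) := by
    rw [Matrix.isUnit_iff_isUnit_det, Matrix.det_diagonal]
    exact isUnit_iff_ne_zero.mpr (Finset.prod_ne_zero_iff.mpr fun i _ => (hπ i).ne')
  have hTu : IsUnit T := aux_isUnit_of_rank T hT
  have hS : IsUnit (T * Matrix.diagonal π) := hTu.mul hD
  -- rank of T * diag(π) * Oᵀ is m
  have hrankS : (T * Matrix.diagonal π * Oᵀ).rank = m := by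
    rw [Matrix.rank_mul_eq_right_of_isUnit_det (T * Matrix.diagonal π) Oᵀ
      ((Matrix.isUnit_iff_isUnit_det _).mp hS), Matrix.rank_transpose]
    exact hO
  -- hence mulVecLin of it is surjective
  have hsurj : LinearMap.range (T * Matrix.diagonal π * Oᵀ).mulVecLin = ⊤ := by
    apply Submodule.eq_top_of_finrank_eq
    rw [Module.finrank_pi, Fintype.card_fin]
    exact hrankS
  have hassoc : P21 = O * (T * Matrix.diagonal π * Oᵀ) := by
    rw [hP21, Matrix.mul_assoc, Matrix.mul_assoc, Matrix.mul_assoc]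
  have hrange : LinearMap.range P21.mulVecLin = LinearMap.range O.mulVecLin := by
    rw [hassoc, Matrix.mulVecLin_mul, LinearMap.range_comp, hsurj, Submodule.map_top]
  have hrank : P21.rank = m := by
    rw [Matrix.rank, hrange, ← Matrix.rank]
    exact hO
  have hUO : LinearMap.range U.mulVecLin = LinearMap.range O.mulVecLin :=
    hUspan.trans hrange
  refine ⟨hrank, hUO, ?_⟩
  rw [← Matrix.mulVec_injective_iff_isUnit]
  intro v w hvw
  have h1 : Uᵀ *ᵥ (O *ᵥ v) = Uᵀ *ᵥ (O *ᵥ w) := by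
    simpa [Matrix.mulVec_mulVec] using hvw
  have hOv : ∀ x : Fin m → ℝ, ∃ y, U *ᵥ y = O *ᵥ x := by
    intro x
    have : O *ᵥ x ∈ LinearMap.range U.mulVecLin := by
      rw [hUO]; exact ⟨x, rfl⟩
    obtain ⟨y, hy⟩ := this
    exact ⟨y, hy⟩
  obtain ⟨y, hy⟩ := hOv v
  obtain ⟨z, hz⟩ := hOv w
  have hcancel : ∀ a : Fin m → ℝ, Uᵀ *ᵥ (U *ᵥ a) = a := by
    intro a
    rw [Matrix.mulVec_mulVec, hUorth, Matrix.one_mulVec]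
  have hyz : y = z := by
    rw [← hcancel y, ← hcancel z, hy, hz, h1]
  have : O *ᵥ v = O *ᵥ w := by rw [← hy, ← hz, hyz]
  exact aux_ker_of_rank O hO this
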